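/- Let n ≥ 3 and let F ⊆ C([n],3) be a shifted family with property U(3,7). Then either F ∈ { A(1,1,n,3), A(4,2,n,3), A(7,3,n,3) }, or |F| < max{ |A(1,1,n,3)|, |A(4,2,n,3)|, |A(7,3,n,3)| }. -/
import Mathlib

set_option maxHeartbeats 1000000


open Finset
open scoped Classical

/-- `F` has property `U(s,q)`: any `s` (not necessarily distinct) members have union of size `≤ q`. -/
def propU (F : Finset (Finset ℕ)) (s q : ℕ) : Prop :=
  ∀ G : Fin s → Finset ℕ, (∀ i, G i ∈ F) → (Finset.univ.sup G).card ≤ q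

/-- `A(p,r,n,k)`: the `k`-subsets of `[n] = {1,…,n}` meeting `[p]` in at least `r` elements. -/
def famA (p r n k : ℕ) : Finset (Finset ℕ) :=
  (Finset.powersetCard k (Finset.Icc 1 n)).filter fun A => r ≤ (A ∩ Finset.Icc 1 p).card

/-- `G ≼ F`: comparing the increasing enumerations elementwise. -/
def shiftLE (G F : Finset ℕ) : Prop :=
  List.Forall₂ (· ≤ ·) (G.sort (· ≤ ·)) (F.sort (· ≤ ·))

/-- `F ⊆ C([n],k)` is shifted. -/
def IsShifted (n k : ℕ) (F : Finset (Finset ℕ)) : Prop :=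
  ∀ A ∈ F, ∀ G ∈ Finset.powersetCard k (Finset.Icc 1 n), shiftLE G A → G ∈ F

/-- `m(n,k,s,q)`: the maximum size of a family `F ⊆ C([n],k)` with property `U(s,q)`. -/
noncomputable def mMax (n k s q : ℕ) : ℕ :=
  ((Finset.powersetCard k (Finset.Icc 1 n)).powerset.filter fun F => propU F s q).sup
    Finset.card

lemma card3 {x y z : ℕ} (hxy : x < y) (hyz : y < z) : ({x,y,z} : Finset ℕ).card = 3 := by
  rw [card_insert_of_notMem (by simp; omega), card_insert_of_notMem (by simp; omega),
    card_singleton]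

lemma sort_triple {a b c : ℕ} (hab : a < b) (hbc : b < c) :
    ({a,b,c} : Finset ℕ).sort (· ≤ ·) = [a,b,c] := by
  rw [Finset.sort_insert (· ≤ ·) (by simp; omega) (by simp; omega),
    Finset.sort_insert (· ≤ ·) (by simp; omega) (by simp; omega), Finset.sort_singleton]

lemma pair_eq {a b p q : ℕ} (hab : a < b) (hpq : p < q) (h : ({a,b} : Finset ℕ) = {p,q}) :
    a = p ∧ b = q := by
  have h1 : a ∈ ({p,q} : Finset ℕ) := h ▸ (by simp)
  have h2 : b ∈ ({p,q} : Finset ℕ) := h ▸ (by simp)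
  have h3 : p ∈ ({a,b} : Finset ℕ) := h.symm ▸ (by simp)
  have h4 : q ∈ ({a,b} : Finset ℕ) := h.symm ▸ (by simp)
  simp at h1 h2 h3 h4; omega

lemma mem3 {n : ℕ} {A : Finset ℕ} (h : A ∈ powersetCard 3 (Icc 1 n)) :
    ∃ a b c, a < b ∧ b < c ∧ A = {a,b,c} ∧ 1 ≤ a ∧ c ≤ n := by
  rw [mem_powersetCard] at h
  obtain ⟨hsub, hcard⟩ := h
  obtain ⟨x, y, z, hxy, hxz, hyz, hA⟩ := card_eq_three.mp hcard
  have hx : 1 ≤ x ∧ x ≤ n := by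
    simpa using mem_Icc.mp (hsub (by rw [hA]; simp))
  have hy : 1 ≤ y ∧ y ≤ n := by
    simpa using mem_Icc.mp (hsub (by rw [hA]; simp))
  have hz : 1 ≤ z ∧ z ≤ n := by
    simpa using mem_Icc.mp (hsub (by rw [hA]; simp))
  have perm : ∀ u v w : ℕ, ({x,y,z} : Finset ℕ) = {u,v,w} ∨ True := fun _ _ _ => Or.inr trivial
  rcases lt_trichotomy x y with h1 | h1 | h1
  · rcases lt_trichotomy y z with h2 | h2 | h2
    · exact ⟨x, y, z, h1, h2, hA, hx.1, hz.2⟩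
    · omega
    · rcases lt_trichotomy x z with h3 | h3 | h3
      · refine ⟨x, z, y, h3, h2, ?_, hx.1, hy.2⟩
        rw [hA]; ext t; simp; tauto
      · omega
      · refine ⟨z, x, y, h3, h1, ?_, hz.1, hy.2⟩
        rw [hA]; ext t; simp; tauto
  · omega
  · rcases lt_trichotomy x z with h2 | h2 | h2
    · refine ⟨y, x, z, h1, h2, ?_, hy.1, hz.2⟩
      rw [hA]; ext t; simp; tauto
    · omega
    · rcases lt_trichotomy y z with h3 | h3 | h3
      · refine ⟨y, z, x, h3, h2, ?_, hy.1, hx.2⟩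
        rw [hA]; ext t; simp; tauto
      · omega
      · refine ⟨z, y, x, h3, h1, ?_, hz.1, hx.2⟩
        rw [hA]; ext t; simp; tauto

lemma shift3 {n : ℕ} {F : Finset (Finset ℕ)} (hshift : IsShifted n 3 F)
    {A : Finset ℕ} (hA : A ∈ F) {a b c x y z : ℕ}
    (hab : a < b) (hbc : b < c) (hAeq : A = {a,b,c})
    (hxy : x < y) (hyz : y < z) (hx1 : 1 ≤ x) (hzn : z ≤ n)
    (hxa : x ≤ a) (hyb : y ≤ b) (hzc : z ≤ c) : ({x,y,z} : Finset ℕ) ∈ F := by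
  apply hshift A hA
  · rw [mem_powersetCard]
    refine ⟨?_, card3 hxy hyz⟩
    intro t ht
    simp only [mem_insert, mem_singleton] at ht
    rw [mem_Icc]; omega
  · unfold shiftLE
    rw [hAeq, sort_triple hab hbc, sort_triple hxy hyz]
    exact List.Forall₂.cons hxa (List.Forall₂.cons hyb (List.Forall₂.cons hzc List.Forall₂.nil))

lemma hU3 {F : Finset (Finset ℕ)} (hU : propU F 3 7) {A B C : Finset ℕ}
    (hA : A ∈ F) (hB : B ∈ F) (hC : C ∈ F) : ((A ∪ B) ∪ C).card ≤ 7 := by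
  have h := hU ![A,B,C] (by
    intro i
    fin_cases i <;> simpa)
  refine le_trans (card_le_card ?_) h
  refine union_subset (union_subset ?_ ?_) ?_
  · simpa using Finset.le_sup (f := ![A,B,C]) (mem_univ (0 : Fin 3))
  · simpa using Finset.le_sup (f := ![A,B,C]) (mem_univ (1 : Fin 3))
  · simpa using Finset.le_sup (f := ![A,B,C]) (mem_univ (2 : Fin 3))

lemma insert7_eq {p q c : ℕ} : insert c ({p,q} : Finset ℕ) = {p,q,c} := by
  ext t; simp; tauto

lemma fiber_struct {n : ℕ} {F : Finset (Finset ℕ)}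
    (hF : F ⊆ powersetCard 3 (Icc 1 n)) {p q : ℕ}
    (hpq : p < q) (hq6 : q ≤ 6) {A : Finset ℕ}
    (hA : A ∈ F) (hns : ¬ A ⊆ Icc 1 6) (hint : A ∩ Icc 1 6 = {p,q}) :
    ∃ c, 7 ≤ c ∧ c ≤ n ∧ A = {p,q,c} := by
  obtain ⟨a, b, c, hab, hbc, hAeq, ha1, hcn⟩ := mem3 (hF hA)
  have hc7 : 7 ≤ c := by
    by_contra hc
    apply hns
    rw [hAeq]
    intro t ht
    simp only [mem_insert, mem_singleton] at ht
    rw [mem_Icc]; omega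
  have hb6 : b ≤ 6 := by
    by_contra hb
    have hsub : A ∩ Icc 1 6 ⊆ {a} := by
      intro t ht
      rw [mem_inter, hAeq, mem_Icc] at ht
      simp only [mem_insert, mem_singleton] at ht ⊢
      omega
    have := card_le_card hsub
    rw [hint, card_singleton] at this
    have : ({p,q} : Finset ℕ).card = 2 := by
      rw [card_insert_of_notMem (by simp; omega), card_singleton]
    omega
  have hABeq : A ∩ Icc 1 6 = {a,b} := by
    rw [hAeq]
    ext t
    simp only [mem_inter, mem_insert, mem_singleton, mem_Icc]
    omega
  rw [hABeq] at hint
  obtain ⟨rfl, rfl⟩ := pair_eq hab hpq hint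
  exact ⟨c, hc7, hcn, hAeq⟩

lemma fib_zero {n : ℕ} {F : Finset (Finset ℕ)} (hn : 8 ≤ n)
    (hF : F ⊆ powersetCard 3 (Icc 1 n)) (hshift : IsShifted n 3 F)
    {p q : ℕ} (hpq : p < q) (hq6 : q ≤ 6) (hp1 : 1 ≤ p)
    (h7 : ({p,q,7} : Finset ℕ) ∉ F) :
    (F.filter (fun A => ¬ A ⊆ Icc 1 6 ∧ A ∩ Icc 1 6 = {p,q})).card = 0 := by
  rw [card_eq_zero, filter_eq_empty_iff]
  rintro A hA ⟨hns, hint⟩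
  obtain ⟨c, hc7, hcn, hAeq⟩ := fiber_struct hF hpq hq6 hA hns hint
  exact h7 (shift3 hshift hA hpq (by omega) hAeq hpq (by omega) hp1 (by omega)
    le_rfl le_rfl hc7)

lemma fib_one {n : ℕ} {F : Finset (Finset ℕ)} (hn : 8 ≤ n)
    (hF : F ⊆ powersetCard 3 (Icc 1 n)) (hshift : IsShifted n 3 F)
    {p q : ℕ} (hpq : p < q) (hq6 : q ≤ 6) (hp1 : 1 ≤ p)
    (h8 : ({p,q,8} : Finset ℕ) ∉ F) :
    (F.filter (fun A => ¬ A ⊆ Icc 1 6 ∧ A ∩ Icc 1 6 = {p,q})).card ≤ 1 := by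
  have hsub : (F.filter (fun A => ¬ A ⊆ Icc 1 6 ∧ A ∩ Icc 1 6 = {p,q}))
      ⊆ {({p,q,7} : Finset ℕ)} := by
    intro A hA
    rw [mem_filter] at hA
    obtain ⟨hAF, hns, hint⟩ := hA
    obtain ⟨c, hc7, hcn, hAeq⟩ := fiber_struct hF hpq hq6 hAF hns hint
    have hc : c = 7 := by
      by_contra hc
      exact h8 (shift3 hshift hAF hpq (by omega) hAeq hpq (by omega) hp1 (by omega)
        le_rfl le_rfl (by omega))
    rw [mem_singleton, hAeq, hc]
  simpa using card_le_card hsub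

lemma fib_gen {n : ℕ} {F : Finset (Finset ℕ)} (hn : 8 ≤ n)
    (hF : F ⊆ powersetCard 3 (Icc 1 n))
    {p q : ℕ} (hpq : p < q) (hq6 : q ≤ 6) :
    (F.filter (fun A => ¬ A ⊆ Icc 1 6 ∧ A ∩ Icc 1 6 = {p,q})).card ≤ n - 6 := by
  have hsub : (F.filter (fun A => ¬ A ⊆ Icc 1 6 ∧ A ∩ Icc 1 6 = {p,q}))
      ⊆ (Icc 7 n).image (fun c => insert c ({p,q} : Finset ℕ)) := by
    intro A hA
    rw [mem_filter] at hA
    obtain ⟨hAF, hns, hint⟩ := hA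
    obtain ⟨c, hc7, hcn, hAeq⟩ := fiber_struct hF hpq hq6 hAF hns hint
    exact mem_image.mpr ⟨c, mem_Icc.mpr ⟨hc7, hcn⟩, by rw [insert7_eq, hAeq]⟩
  calc (F.filter _).card ≤ _ := card_le_card hsub
    _ ≤ (Icc 7 n).card := card_image_le
    _ ≤ n - 6 := by rw [Nat.card_Icc]; omega


lemma famA73_card {n : ℕ} (hn : 7 ≤ n) : (famA 7 3 n 3).card = 35 := by
  have heq : famA 7 3 n 3 = powersetCard 3 (Icc 1 7) := by
    ext A
    simp only [famA, mem_filter, mem_powersetCard]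
    constructor
    · rintro ⟨⟨hsub, hcard⟩, hge⟩
      have h1 : A ∩ Icc 1 7 = A :=
        eq_of_subset_of_card_le inter_subset_left (by omega)
      exact ⟨inter_eq_left.mp h1, hcard⟩
    · rintro ⟨hsub, hcard⟩
      refine ⟨⟨hsub.trans (Icc_subset_Icc_right hn), hcard⟩, ?_⟩
      rw [inter_eq_left.mpr hsub, hcard]
  rw [heq]
  decide

lemma famA42_lb {n : ℕ} (hn : 8 ≤ n) : 6*(n-4) + 4 ≤ (famA 4 2 n 3).card := by
  set S1 : Finset (Finset ℕ) :=
    ((powersetCard 2 (Icc 1 4)) ×ˢ (Icc 5 n)).image (fun Pc => insert Pc.2 Pc.1) with hS1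
  have hmem1 : ∀ P ∈ powersetCard 2 (Icc 1 4), ∀ c ∈ Icc 5 n,
      (insert c P ∈ famA 4 2 n 3 ∧ c ∉ P) := by
    intro P hP c hc
    rw [mem_powersetCard] at hP
    rw [mem_Icc] at hc
    have hcP : c ∉ P := fun h => by
      have := mem_Icc.mp (hP.1 h); omega
    constructor
    · rw [famA, mem_filter, mem_powersetCard]
      refine ⟨⟨?_, ?_⟩, ?_⟩
      · intro t ht
        rw [mem_insert] at ht
        rcases ht with rfl | ht
        · rw [mem_Icc]; omega
        · have := mem_Icc.mp (hP.1 ht); rw [mem_Icc]; omega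
      · rw [card_insert_of_notMem hcP, hP.2]
      · have : P ⊆ insert c P ∩ Icc 1 4 := by
          intro t ht
          rw [mem_inter, mem_insert]
          exact ⟨Or.inr ht, hP.1 ht⟩
        calc 2 = P.card := hP.2.symm
          _ ≤ _ := card_le_card this
    · exact hcP
  have h1 : S1 ⊆ famA 4 2 n 3 := by
    intro A hA
    rw [hS1, mem_image] at hA
    obtain ⟨⟨P, c⟩, hPc, rfl⟩ := hA
    rw [mem_product] at hPc
    exact (hmem1 P hPc.1 c hPc.2).1
  have h2 : powersetCard 3 (Icc 1 4) ⊆ famA 4 2 n 3 := by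
    intro A hA
    rw [mem_powersetCard] at hA
    rw [famA, mem_filter, mem_powersetCard]
    refine ⟨⟨hA.1.trans (Icc_subset_Icc_right (by omega)), hA.2⟩, ?_⟩
    rw [inter_eq_left.mpr hA.1, hA.2]
    omega
  have hd : Disjoint S1 (powersetCard 3 (Icc 1 4)) := by
    rw [disjoint_left]
    intro A hA hA2
    rw [hS1, mem_image] at hA
    obtain ⟨⟨P, c⟩, hPc, rfl⟩ := hA
    rw [mem_product, mem_Icc] at hPc
    rw [mem_powersetCard] at hA2
    have : c ∈ Icc 1 4 := hA2.1 (mem_insert_self _ _)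
    rw [mem_Icc] at this
    omega
  have hcard1 : S1.card = 6*(n-4) := by
    rw [hS1, card_image_of_injOn, card_product, card_powersetCard, Nat.card_Icc,
      Nat.card_Icc]
    · have h46 : Nat.choose (4 + 1 - 1) 2 = 6 := by decide
      rw [h46]
      omega
    · rintro ⟨P, c⟩ hPc ⟨Q, d⟩ hQd h
      simp only [mem_coe, mem_product, mem_Icc] at hPc hQd
      have hP4 := (mem_powersetCard.mp hPc.1).1
      have hQ4 := (mem_powersetCard.mp hQd.1).1
      simp only at h
      have hcd : c = d := by
        have hc : c ∈ insert d Q := by rw [← h]; exact mem_insert_self _ _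
        rw [mem_insert] at hc
        rcases hc with rfl | hc
        · rfl
        · have := mem_Icc.mp (hQ4 hc); omega
      subst hcd
      have hcP : c ∉ P := fun hh => by have := mem_Icc.mp (hP4 hh); omega
      have hcQ : c ∉ Q := fun hh => by have := mem_Icc.mp (hQ4 hh); omega
      have : P = Q := by
        have := congrArg (fun s => Finset.erase s c) h
        simpa [erase_insert hcP, erase_insert hcQ] using this
      rw [this]
  have hcard2 : (powersetCard 3 (Icc 1 4)).card = 4 := by decide
  calc 6*(n-4) + 4 = S1.card + (powersetCard 3 (Icc 1 4)).card := by rw [hcard1, hcard2]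
    _ = (S1 ∪ powersetCard 3 (Icc 1 4)).card := (card_union_of_disjoint hd).symm
    _ ≤ (famA 4 2 n 3).card := card_le_card (union_subset h1 h2)


lemma mixed_bound {n : ℕ} (hn : 8 ≤ n) {F : Finset (Finset ℕ)}
    (hF : F ⊆ powersetCard 3 (Icc 1 n)) (hshift : IsShifted n 3 F) (hU : propU F 3 7)
    (m1 : ({2,3,4} : Finset ℕ) ∈ F) (m2 : ({1,5,6} : Finset ℕ) ∈ F)
    (m3 : ({1,2,8} : Finset ℕ) ∈ F) :
    F.card < max (famA 1 1 n 3).card (max (famA 4 2 n 3).card (famA 7 3 n 3).card) := by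
  set M := max (famA 1 1 n 3).card (max (famA 4 2 n 3).card (famA 7 3 n 3).card) with hM
  have hM35 : 35 ≤ M := by
    have := famA73_card (n := n) (by omega)
    calc (35 : ℕ) = (famA 7 3 n 3).card := this.symm
      _ ≤ _ := le_trans (le_max_right _ _) (le_max_right _ _)
  have hM6 : 6*(n-4) + 4 ≤ M := by
    calc 6*(n-4) + 4 ≤ (famA 4 2 n 3).card := famA42_lb hn
      _ ≤ _ := le_trans (le_max_left _ _) (le_max_right _ _)
  have no8 : ∀ A B C : Finset ℕ, A ∈ F → B ∈ F → C ∈ F → ((A ∪ B) ∪ C).card = 8 → False := by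
    intro A B C hA hB hC h8
    have := hU3 hU hA hB hC
    omega
  have h127 : ({1,2,7} : Finset ℕ) ∈ F :=
    shift3 hshift m3 (by norm_num) (by norm_num) rfl (by norm_num) (by norm_num)
      (by norm_num) (by omega) (by norm_num) (by norm_num) (by norm_num)
  set t : Finset ℕ → ℕ :=
    fun P => (F.filter (fun A => ¬ A ⊆ Icc 1 6 ∧ A ∩ Icc 1 6 = P)).card with ht
  have key : ∀ A ∈ F.filter (fun A => ¬ A ⊆ Icc 1 6), A ∩ Icc 1 6 ∈ powersetCard 2 (Icc 1 6) := by
    intro A hA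
    obtain ⟨hAF, hns⟩ := mem_filter.mp hA
    have hcard3 : A.card = 3 := (mem_powersetCard.mp (hF hAF)).2
    have hu : ((A ∪ {2,3,4}) ∪ {1,5,6}).card ≤ 7 := hU3 hU hAF m1 m2
    have heq : (A ∪ {2,3,4}) ∪ {1,5,6} = A ∪ Icc 1 6 := by
      rw [union_assoc]
      congr 1
      decide
    rw [heq] at hu
    have h1 : (A \ Icc 1 6).card + (Icc 1 6).card = (A ∪ Icc 1 6).card :=
      card_sdiff_add_card _ _
    have h2 : (A ∩ Icc 1 6).card + (A \ Icc 1 6).card = A.card :=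
      card_inter_add_card_sdiff _ _
    have hI6 : (Icc 1 6 : Finset ℕ).card = 6 := by decide
    have hne3 : (A ∩ Icc 1 6).card ≠ 3 := by
      intro h3
      exact hns (inter_eq_left.mp
        (eq_of_subset_of_card_le inter_subset_left (by omega)))
    exact mem_powersetCard.mpr ⟨inter_subset_right, by omega⟩
  have hsum : F.card = (F.filter (fun A => A ⊆ Icc 1 6)).card
      + ∑ P ∈ powersetCard 2 (Icc 1 6), t P := by
    have hsplit := card_filter_add_card_filter_not
      (s := F) (p := fun A => A ⊆ Icc 1 6)
    have hfib := card_eq_sum_card_fiberwise key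
    rw [← hsplit, hfib]
    congr 1
    refine Finset.sum_congr rfl (fun P _ => ?_)
    rw [ht, filter_filter]
  have hS15 : powersetCard 2 (Icc 1 6) =
      ({{1,2},{1,3},{1,4},{1,5},{1,6},{2,3},{2,4},{2,5},{2,6},{3,4},{3,5},{3,6},{4,5},{4,6},{5,6}}
        : Finset (Finset ℕ)) := by decide
  have hexp : ∑ P ∈ powersetCard 2 (Icc 1 6), t P =
      t {1,2} + t {1,3} + t {1,4} + t {1,5} + t {1,6} + t {2,3} + t {2,4} + t {2,5}
      + t {2,6} + t {3,4} + t {3,5} + t {3,6} + t {4,5} + t {4,6} + t {5,6} := by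
    rw [hS15]
    rw [Finset.sum_insert (by decide), Finset.sum_insert (by decide),
      Finset.sum_insert (by decide), Finset.sum_insert (by decide),
      Finset.sum_insert (by decide), Finset.sum_insert (by decide),
      Finset.sum_insert (by decide), Finset.sum_insert (by decide),
      Finset.sum_insert (by decide), Finset.sum_insert (by decide),
      Finset.sum_insert (by decide), Finset.sum_insert (by decide),
      Finset.sum_insert (by decide), Finset.sum_insert (by decide),
      Finset.sum_singleton]
    omega
  -- universal fiber bounds
  have hno347 : ({3,4,7} : Finset ℕ) ∉ F := fun h => no8 _ _ _ h m3 m2 (by decide)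
  have z34 : t {3,4} = 0 := fib_zero hn hF hshift (by norm_num) (by norm_num) (by norm_num) hno347
  have z35 : t {3,5} = 0 := by
    refine fib_zero hn hF hshift (by norm_num) (by norm_num) (by norm_num) (fun h => hno347 ?_)
    exact shift3 hshift h (by norm_num) (by norm_num) rfl (by norm_num) (by norm_num)
      (by norm_num) (by omega) (by norm_num) (by norm_num) (by norm_num)
  have z36 : t {3,6} = 0 := by
    refine fib_zero hn hF hshift (by norm_num) (by norm_num) (by norm_num) (fun h => hno347 ?_)
    exact shift3 hshift h (by norm_num) (by norm_num) rfl (by norm_num) (by norm_num)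
      (by norm_num) (by omega) (by norm_num) (by norm_num) (by norm_num)
  have z45 : t {4,5} = 0 := by
    refine fib_zero hn hF hshift (by norm_num) (by norm_num) (by norm_num) (fun h => hno347 ?_)
    exact shift3 hshift h (by norm_num) (by norm_num) rfl (by norm_num) (by norm_num)
      (by norm_num) (by omega) (by norm_num) (by norm_num) (by norm_num)
  have z46 : t {4,6} = 0 := by
    refine fib_zero hn hF hshift (by norm_num) (by norm_num) (by norm_num) (fun h => hno347 ?_)
    exact shift3 hshift h (by norm_num) (by norm_num) rfl (by norm_num) (by norm_num)
      (by norm_num) (by omega) (by norm_num) (by norm_num) (by norm_num)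
  have z56 : t {5,6} = 0 := by
    refine fib_zero hn hF hshift (by norm_num) (by norm_num) (by norm_num) (fun h => hno347 ?_)
    exact shift3 hshift h (by norm_num) (by norm_num) rfl (by norm_num) (by norm_num)
      (by norm_num) (by omega) (by norm_num) (by norm_num) (by norm_num)
  have o16 : t {1,6} ≤ 1 := by
    refine fib_one hn hF hshift (by norm_num) (by norm_num) (by norm_num) (fun h => ?_)
    refine no8 {1,5,7} {1,6,8} {2,3,4} ?_ h m1 (by decide)
    exact shift3 hshift h (by norm_num) (by norm_num) rfl (by norm_num) (by norm_num)
      (by norm_num) (by omega) (by norm_num) (by norm_num) (by norm_num)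
  have o24 : t {2,4} ≤ 1 := by
    refine fib_one hn hF hshift (by norm_num) (by norm_num) (by norm_num) (fun h => ?_)
    refine no8 {1,4,7} {2,3,8} {1,5,6} ?_ ?_ m2 (by decide)
    · exact shift3 hshift h (by norm_num) (by norm_num) rfl (by norm_num) (by norm_num)
        (by norm_num) (by omega) (by norm_num) (by norm_num) (by norm_num)
    · exact shift3 hshift h (by norm_num) (by norm_num) rfl (by norm_num) (by norm_num)
        (by norm_num) (by omega) (by norm_num) (by norm_num) (by norm_num)
  have o25 : t {2,5} ≤ 1 := by
    refine fib_one hn hF hshift (by norm_num) (by norm_num) (by norm_num) (fun h => ?_)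
    refine no8 {1,4,7} {2,3,8} {1,5,6} ?_ ?_ m2 (by decide)
    · exact shift3 hshift h (by norm_num) (by norm_num) rfl (by norm_num) (by norm_num)
        (by norm_num) (by omega) (by norm_num) (by norm_num) (by norm_num)
    · exact shift3 hshift h (by norm_num) (by norm_num) rfl (by norm_num) (by norm_num)
        (by norm_num) (by omega) (by norm_num) (by norm_num) (by norm_num)
  have o26 : t {2,6} ≤ 1 := by
    refine fib_one hn hF hshift (by norm_num) (by norm_num) (by norm_num) (fun h => ?_)
    refine no8 {1,5,7} {2,6,8} {2,3,4} ?_ h m1 (by decide)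
    exact shift3 hshift h (by norm_num) (by norm_num) rfl (by norm_num) (by norm_num)
      (by norm_num) (by omega) (by norm_num) (by norm_num) (by norm_num)
  have g12 : t {1,2} ≤ n - 6 := fib_gen hn hF (by norm_num) (by norm_num)
  have g13 : t {1,3} ≤ n - 6 := fib_gen hn hF (by norm_num) (by norm_num)
  have g14 : t {1,4} ≤ n - 6 := fib_gen hn hF (by norm_num) (by norm_num)
  have g15 : t {1,5} ≤ n - 6 := fib_gen hn hF (by norm_num) (by norm_num)
  have g23 : t {2,3} ≤ n - 6 := fib_gen hn hF (by norm_num) (by norm_num)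
  -- implications between indicator sets
  have imp1514 : ({1,5,8} : Finset ℕ) ∈ F → ({1,4,8} : Finset ℕ) ∈ F := fun h =>
    shift3 hshift h (by norm_num) (by norm_num) rfl (by norm_num) (by norm_num)
      (by norm_num) (by omega) (by norm_num) (by norm_num) (by norm_num)
  have imp1413 : ({1,4,8} : Finset ℕ) ∈ F → ({1,3,8} : Finset ℕ) ∈ F := fun h =>
    shift3 hshift h (by norm_num) (by norm_num) rfl (by norm_num) (by norm_num)
      (by norm_num) (by omega) (by norm_num) (by norm_num) (by norm_num)
  have imp2313 : ({2,3,8} : Finset ℕ) ∈ F → ({1,3,8} : Finset ℕ) ∈ F := fun h =>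
    shift3 hshift h (by norm_num) (by norm_num) rfl (by norm_num) (by norm_num)
      (by norm_num) (by omega) (by norm_num) (by norm_num) (by norm_num)
  have excl1423 : ¬(({1,4,8} : Finset ℕ) ∈ F ∧ ({2,3,8} : Finset ℕ) ∈ F) := by
    rintro ⟨h14, h23⟩
    refine no8 {1,4,7} {2,3,8} {1,5,6} ?_ h23 m2 (by decide)
    exact shift3 hshift h14 (by norm_num) (by norm_num) rfl (by norm_num) (by norm_num)
      (by norm_num) (by omega) (by norm_num) (by norm_num) (by norm_num)
  -- F0 bound helper
  have hF0sub : ∀ (E : Finset (Finset ℕ)), (∀ B ∈ E, B ∉ F) →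
      (F.filter (fun A => A ⊆ Icc 1 6)).card ≤ (powersetCard 3 (Icc 1 6) \ E).card := by
    intro E hE
    refine card_le_card ?_
    intro A hA
    obtain ⟨hAF, hA6⟩ := mem_filter.mp hA
    rw [mem_sdiff]
    refine ⟨mem_powersetCard.mpr ⟨hA6, (mem_powersetCard.mp (hF hAF)).2⟩, fun hAE => hE A hAE hAF⟩
  rw [hsum, hexp]
  by_cases hb15 : ({1,5,8} : Finset ℕ) ∈ F
  · -- combo 5
    have hb14 := imp1514 hb15
    have hb13 := imp1413 hb14
    have h147 : ({1,4,7} : Finset ℕ) ∈ F :=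
      shift3 hshift hb15 (by norm_num) (by norm_num) rfl (by norm_num) (by norm_num)
        (by norm_num) (by omega) (by norm_num) (by norm_num) (by norm_num)
    have h137 : ({1,3,7} : Finset ℕ) ∈ F :=
      shift3 hshift hb14 (by norm_num) (by norm_num) rfl (by norm_num) (by norm_num)
        (by norm_num) (by omega) (by norm_num) (by norm_num) (by norm_num)
    have o23 : t {2,3} ≤ 1 := by
      refine fib_one hn hF hshift (by norm_num) (by norm_num) (by norm_num) (fun h => ?_)
      exact excl1423 ⟨hb14, h⟩
    have hs0 : (F.filter (fun A => A ⊆ Icc 1 6)).card ≤ 14 := by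
      have := hF0sub ({{4,5,6},{3,5,6},{2,5,6},{2,3,6},{2,4,6},{3,4,6}} : Finset (Finset ℕ)) ?_
      · have hc : ((powersetCard 3 (Icc 1 6)) \
            ({{4,5,6},{3,5,6},{2,5,6},{2,3,6},{2,4,6},{3,4,6}} : Finset (Finset ℕ))).card = 14 := by
          decide
        omega
      · intro B hB
        simp only [mem_insert, mem_singleton] at hB
        rcases hB with rfl | rfl | rfl | rfl | rfl | rfl
        · exact fun hBF => no8 _ _ _ h127 hb13 hBF (by decide)
        · exact fun hBF => no8 _ _ _ h127 hb14 hBF (by decide)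
        · exact fun hBF => no8 _ _ _ h137 hb14 hBF (by decide)
        · exact fun hBF => no8 _ _ _ h147 hb15 hBF (by decide)
        · exact fun hBF => no8 _ _ _ h137 hb15 hBF (by decide)
        · exact fun hBF => no8 _ _ _ h127 hb15 hBF (by decide)
    omega
  · by_cases hb23 : ({2,3,8} : Finset ℕ) ∈ F
    · -- combo 3
      have hb13 := imp2313 hb23
      have hnb14 : ({1,4,8} : Finset ℕ) ∉ F := fun h => excl1423 ⟨h, hb23⟩
      have o14 : t {1,4} ≤ 1 :=
        fib_one hn hF hshift (by norm_num) (by norm_num) (by norm_num) hnb14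
      have o15 : t {1,5} ≤ 1 :=
        fib_one hn hF hshift (by norm_num) (by norm_num) (by norm_num) hb15
      have hs0 : (F.filter (fun A => A ⊆ Icc 1 6)).card ≤ 19 := by
        have := hF0sub ({{4,5,6}} : Finset (Finset ℕ)) ?_
        · have hc : ((powersetCard 3 (Icc 1 6)) \ ({{4,5,6}} : Finset (Finset ℕ))).card = 19 := by
            decide
          omega
        · intro B hB
          simp only [mem_singleton] at hB
          subst hB
          exact fun hBF => no8 _ _ _ h127 hb13 hBF (by decide)
      omega
    · by_cases hb14 : ({1,4,8} : Finset ℕ) ∈ F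
      · -- combo 4
        have hb13 := imp1413 hb14
        have h137 : ({1,3,7} : Finset ℕ) ∈ F :=
          shift3 hshift hb14 (by norm_num) (by norm_num) rfl (by norm_num) (by norm_num)
            (by norm_num) (by omega) (by norm_num) (by norm_num) (by norm_num)
        have o15 : t {1,5} ≤ 1 :=
          fib_one hn hF hshift (by norm_num) (by norm_num) (by norm_num) hb15
        have o23 : t {2,3} ≤ 1 :=
          fib_one hn hF hshift (by norm_num) (by norm_num) (by norm_num) hb23
        have hs0 : (F.filter (fun A => A ⊆ Icc 1 6)).card ≤ 17 := by
          have := hF0sub ({{4,5,6},{3,5,6},{2,5,6}} : Finset (Finset ℕ)) ?_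
          · have hc : ((powersetCard 3 (Icc 1 6)) \
                ({{4,5,6},{3,5,6},{2,5,6}} : Finset (Finset ℕ))).card = 17 := by
              decide
            omega
          · intro B hB
            simp only [mem_insert, mem_singleton] at hB
            rcases hB with rfl | rfl | rfl
            · exact fun hBF => no8 _ _ _ h127 hb13 hBF (by decide)
            · exact fun hBF => no8 _ _ _ h127 hb14 hBF (by decide)
            · exact fun hBF => no8 _ _ _ h137 hb14 hBF (by decide)
        omega
      · by_cases hb13 : ({1,3,8} : Finset ℕ) ∈ F
        · -- combo 2
          have o14 : t {1,4} ≤ 1 :=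
            fib_one hn hF hshift (by norm_num) (by norm_num) (by norm_num) hb14
          have o15 : t {1,5} ≤ 1 :=
            fib_one hn hF hshift (by norm_num) (by norm_num) (by norm_num) hb15
          have o23 : t {2,3} ≤ 1 :=
            fib_one hn hF hshift (by norm_num) (by norm_num) (by norm_num) hb23
          have hs0 : (F.filter (fun A => A ⊆ Icc 1 6)).card ≤ 19 := by
            have := hF0sub ({{4,5,6}} : Finset (Finset ℕ)) ?_
            · have hc : ((powersetCard 3 (Icc 1 6)) \ ({{4,5,6}} : Finset (Finset ℕ))).card = 19 := by
                decide
              omega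
            · intro B hB
              simp only [mem_singleton] at hB
              subst hB
              exact fun hBF => no8 _ _ _ h127 hb13 hBF (by decide)
          omega
        · -- combo 1
          have o13 : t {1,3} ≤ 1 :=
            fib_one hn hF hshift (by norm_num) (by norm_num) (by norm_num) hb13
          have o14 : t {1,4} ≤ 1 :=
            fib_one hn hF hshift (by norm_num) (by norm_num) (by norm_num) hb14
          have o15 : t {1,5} ≤ 1 :=
            fib_one hn hF hshift (by norm_num) (by norm_num) (by norm_num) hb15
          have o23 : t {2,3} ≤ 1 :=
            fib_one hn hF hshift (by norm_num) (by norm_num) (by norm_num) hb23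
          have hs0 : (F.filter (fun A => A ⊆ Icc 1 6)).card ≤ 20 := by
            have := hF0sub (∅ : Finset (Finset ℕ)) (by simp)
            have hc : ((powersetCard 3 (Icc 1 6)) \ (∅ : Finset (Finset ℕ))).card = 20 := by
              decide
            omega
          omega

/-- Theorem 2.9 of the paper, the complete solution for `k = s = 3`, `q = 7`. -/
theorem stmt11 (n : ℕ) (hn : 3 ≤ n)
    (F : Finset (Finset ℕ)) (hF : F ⊆ Finset.powersetCard 3 (Finset.Icc 1 n))
    (hshift : IsShifted n 3 F) (hU : propU F 3 7) :
    F = famA 1 1 n 3 ∨ F = famA 4 2 n 3 ∨ F = famA 7 3 n 3 ∨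
      F.card < max (famA 1 1 n 3).card (max (famA 4 2 n 3).card (famA 7 3 n 3).card) := by
  by_cases h1 : F ⊆ famA 1 1 n 3
  · rcases eq_or_ne F (famA 1 1 n 3) with hEq | hNe
    · exact Or.inl hEq
    · refine Or.inr (Or.inr (Or.inr ?_))
      exact lt_of_lt_of_le (card_lt_card (Finset.ssubset_iff_subset_ne.mpr ⟨h1, hNe⟩))
        (le_max_left _ _)
  by_cases h2 : F ⊆ famA 4 2 n 3
  · rcases eq_or_ne F (famA 4 2 n 3) with hEq | hNe
    · exact Or.inr (Or.inl hEq)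
    · refine Or.inr (Or.inr (Or.inr ?_))
      exact lt_of_lt_of_le (card_lt_card (Finset.ssubset_iff_subset_ne.mpr ⟨h2, hNe⟩))
        (le_trans (le_max_left _ _) (le_max_right _ _))
  by_cases h3 : F ⊆ famA 7 3 n 3
  · rcases eq_or_ne F (famA 7 3 n 3) with hEq | hNe
    · exact Or.inr (Or.inr (Or.inl hEq))
    · refine Or.inr (Or.inr (Or.inr ?_))
      exact lt_of_lt_of_le (card_lt_card (Finset.ssubset_iff_subset_ne.mpr ⟨h3, hNe⟩))
        (le_trans (le_max_right _ _) (le_max_right _ _))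
  refine Or.inr (Or.inr (Or.inr ?_))
  -- derive {1,2,8} ∈ F and 8 ≤ n from ¬h3
  obtain ⟨A, hAF, hA3⟩ := not_subset.mp h3
  obtain ⟨a, b, c, hab, hbc, hAeq, ha1, hcn⟩ := mem3 (hF hAF)
  have hA3' : ¬ 3 ≤ (A ∩ Icc 1 7).card := by
    intro hge
    exact hA3 (by simp only [famA, mem_filter]; exact ⟨hF hAF, hge⟩)
  have hc8 : 8 ≤ c := by
    by_contra hc
    apply hA3'
    have hsub : A ⊆ Icc 1 7 := by
      rw [hAeq]
      intro x hx
      simp only [mem_insert, mem_singleton] at hx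
      rw [mem_Icc]
      omega
    rw [inter_eq_left.mpr hsub, (mem_powersetCard.mp (hF hAF)).2]
  have hn8 : 8 ≤ n := le_trans hc8 hcn
  have m3 : ({1,2,8} : Finset ℕ) ∈ F :=
    shift3 hshift hAF hab hbc hAeq (by norm_num) (by norm_num) (by norm_num) (by omega)
      (by omega) (by omega) (by omega)
  -- derive {2,3,4} ∈ F from ¬h1
  obtain ⟨A', hAF', hA1⟩ := not_subset.mp h1
  obtain ⟨a', b', c', hab', hbc', hAeq', ha1', hcn'⟩ := mem3 (hF hAF')
  have hA1' : ¬ 1 ≤ (A' ∩ Icc 1 1).card := by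
    intro hge
    exact hA1 (by simp only [famA, mem_filter]; exact ⟨hF hAF', hge⟩)
  have h1n : (1 : ℕ) ∉ A' := by
    intro hmem
    apply hA1'
    have : 1 ∈ A' ∩ Icc 1 1 := mem_inter.mpr ⟨hmem, by simp⟩
    exact card_pos.mpr ⟨1, this⟩
  have ha2 : 2 ≤ a' := by
    have hmem : a' ∈ A' := by rw [hAeq']; simp
    by_contra h
    have he : a' = 1 := by omega
    exact h1n (he ▸ hmem)
  have m1 : ({2,3,4} : Finset ℕ) ∈ F :=
    shift3 hshift hAF' hab' hbc' hAeq' (by norm_num) (by norm_num) (by norm_num) (by omega)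
      (by omega) (by omega) (by omega)
  -- derive {1,5,6} ∈ F from ¬h2
  obtain ⟨A'', hAF'', hA2⟩ := not_subset.mp h2
  obtain ⟨a'', b'', c'', hab'', hbc'', hAeq'', ha1'', hcn''⟩ := mem3 (hF hAF'')
  have hA2' : ¬ 2 ≤ (A'' ∩ Icc 1 4).card := by
    intro hge
    exact hA2 (by simp only [famA, mem_filter]; exact ⟨hF hAF'', hge⟩)
  have hb5 : 5 ≤ b'' := by
    by_contra hb
    apply hA2'
    have hsub : ({a'', b''} : Finset ℕ) ⊆ A'' ∩ Icc 1 4 := by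
      intro x hx
      simp only [mem_insert, mem_singleton] at hx
      rw [mem_inter, hAeq'', mem_Icc]
      rcases hx with rfl | rfl
      · exact ⟨by simp, by omega⟩
      · exact ⟨by simp, by omega⟩
    have h2' : ({a'', b''} : Finset ℕ).card = 2 := by
      rw [card_insert_of_notMem (by simp; omega), card_singleton]
    calc (2 : ℕ) = _ := h2'.symm
      _ ≤ _ := card_le_card hsub
  have m2 : ({1,5,6} : Finset ℕ) ∈ F :=
    shift3 hshift hAF'' hab'' hbc'' hAeq'' (by norm_num) (by norm_num) (by norm_num) (by omega)
      (by omega) (by omega) (by omega)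
  exact mixed_bound hn8 hF hshift hU m1 m2 m3
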